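/- Let a ∈ ℂ and let · be a commutative associative bilinear multiplication on 𝒲(a,−1) satisfying the compatibility condition 2 z·[x,y] = [z·x, y] + [x, z·y] for all x, y, z. Then there exist finitely supported families (α_t)_{t ∈ ℤ} and (β_t)_{t ∈ ℤ} of complex numbers such that L_i · L_j = Σ_t α_t L_{i+j+t} + Σ_t β_t I_{i+j+t}, L_i · I_j = Σ_t α_t I_{i+j+t}, and I_i · I_j = 0 for all i, j ∈ ℤ. Conversely, for any such families these formulas define a commutative associative multiplication satisfying the compatibility condition; in other words, the transposed Poisson structures on 𝒲(a,−1) are exactly the mutations of the extended Laurent polynomial algebra. -/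

import Mathlib

/-- The underlying space of the Lie algebra `𝒲(a,b)`, with basis
`L m = single (Sum.inl m) 1` and `I n = single (Sum.inr n) 1`. -/
abbrev Wab : Type := (ℤ ⊕ ℤ) →₀ ℂ

/-- The bracket of `𝒲(a,b)` on basis elements:
`[L m, L n] = (m-n) L (m+n)`, `[L m, I n] = -(n+a+bm) I (m+n)`, `[I m, I n] = 0`. -/
noncomputable def wabBasic (a b : ℂ) : ℤ ⊕ ℤ → ℤ ⊕ ℤ → Wab
  | Sum.inl m, Sum.inl n => (((m : ℂ) - (n : ℂ))) • Finsupp.single (Sum.inl (m + n)) (1 : ℂ)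
  | Sum.inl m, Sum.inr n => (-((n : ℂ) + a + b * (m : ℂ))) • Finsupp.single (Sum.inr (m + n)) (1 : ℂ)
  | Sum.inr m, Sum.inl n => (((m : ℂ) + a + b * (n : ℂ))) • Finsupp.single (Sum.inr (m + n)) (1 : ℂ)
  | Sum.inr _, Sum.inr _ => 0

/-- The Lie bracket of `𝒲(a,b)`, extended bilinearly from basis elements. -/
noncomputable def wabBracket (a b : ℂ) (f g : Wab) : Wab :=
  f.sum fun p c => g.sum fun q d => (c * d) • wabBasic a b p q

/-- The basis element `L m` of `𝒲(a,b)`. -/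
noncomputable def Lgen (m : ℤ) : Wab := Finsupp.single (Sum.inl m) 1

/-- The basis element `I m` of `𝒲(a,b)`. -/
noncomputable def Igen (m : ℤ) : Wab := Finsupp.single (Sum.inr m) 1

/-- The mutation product of the extended Laurent polynomial algebra determined
by finitely supported families `α, β`, on basis elements. -/
noncomputable def wabBasicMul (α β : ℤ →₀ ℂ) : ℤ ⊕ ℤ → ℤ ⊕ ℤ → Wab
  | Sum.inl i, Sum.inl j =>
      (α.sum fun t c => c • Finsupp.single (Sum.inl (i + j + t)) (1 : ℂ)) +
      (β.sum fun t c => c • Finsupp.single (Sum.inr (i + j + t)) (1 : ℂ))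
  | Sum.inl i, Sum.inr j => α.sum fun t c => c • Finsupp.single (Sum.inr (i + j + t)) (1 : ℂ)
  | Sum.inr i, Sum.inl j => α.sum fun t c => c • Finsupp.single (Sum.inr (i + j + t)) (1 : ℂ)
  | Sum.inr _, Sum.inr _ => 0

/-- The mutation product of the extended Laurent polynomial algebra determined
by `α, β`, extended bilinearly: `L_i · L_j = Σ_t α_t L_{i+j+t} + Σ_t β_t I_{i+j+t}`,
`L_i · I_j = Σ_t α_t I_{i+j+t}`, `I_i · I_j = 0`. -/
noncomputable def wabMul (α β : ℤ →₀ ℂ) (f g : Wab) : Wab :=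
  f.sum fun p c => g.sum fun q d => (c * d) • wabBasicMul α β p q

noncomputable def bilin (M : ℤ ⊕ ℤ → ℤ ⊕ ℤ → Wab) : Wab →ₗ[ℂ] Wab →ₗ[ℂ] Wab :=
  Finsupp.lsum ℂ fun p => LinearMap.toSpanSingleton ℂ (Wab →ₗ[ℂ] Wab)
    (Finsupp.lsum ℂ fun q => LinearMap.toSpanSingleton ℂ Wab (M p q))

lemma bilin_apply (M : ℤ ⊕ ℤ → ℤ ⊕ ℤ → Wab) (f g : Wab) :
    bilin M f g = f.sum fun p c => g.sum fun q d => (c * d) • M p q := by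
  simp [bilin, Finsupp.lsum_apply, LinearMap.finsupp_sum_apply, Finsupp.smul_sum, smul_smul,
    LinearMap.toSpanSingleton_apply]

lemma bilin_single (M : ℤ ⊕ ℤ → ℤ ⊕ ℤ → Wab) (p q : ℤ ⊕ ℤ) (c d : ℂ) :
    bilin M (Finsupp.single p c) (Finsupp.single q d) = (c * d) • M p q := by
  rw [bilin_apply, Finsupp.sum_single_index, Finsupp.sum_single_index]
  · simp
  · simp

lemma wabMul_eq (α β : ℤ →₀ ℂ) (f g : Wab) :
    wabMul α β f g = bilin (wabBasicMul α β) f g := (bilin_apply _ f g).symm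

lemma wabBracket_eq (a b : ℂ) (f g : Wab) :
    wabBracket a b f g = bilin (wabBasic a b) f g := (bilin_apply _ f g).symm

noncomputable def SS (γ : ℤ →₀ ℂ) (n : ℤ) (σ : ℤ → ℤ ⊕ ℤ) : Wab :=
  γ.sum fun t c => c • Finsupp.single (σ (n + t)) (1 : ℂ)

lemma wabBasicMul_ll (α β : ℤ →₀ ℂ) (i j : ℤ) :
    wabBasicMul α β (Sum.inl i) (Sum.inl j) = SS α (i + j) Sum.inl + SS β (i + j) Sum.inr := rfl

lemma wabBasicMul_li (α β : ℤ →₀ ℂ) (i j : ℤ) :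
    wabBasicMul α β (Sum.inl i) (Sum.inr j) = SS α (i + j) Sum.inr := rfl

lemma wabBasicMul_il (α β : ℤ →₀ ℂ) (i j : ℤ) :
    wabBasicMul α β (Sum.inr i) (Sum.inl j) = SS α (i + j) Sum.inr := rfl

lemma wabBasicMul_ii (α β : ℤ →₀ ℂ) (i j : ℤ) :
    wabBasicMul α β (Sum.inr i) (Sum.inr j) = 0 := rfl

lemma SS_shift (γ : ℤ →₀ ℂ) (n n' : ℤ) (h : n = n') (σ : ℤ → ℤ ⊕ ℤ) : SS γ n σ = SS γ n' σ := by
  rw [h]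

lemma bilin_SS_left (M : ℤ ⊕ ℤ → ℤ ⊕ ℤ → Wab) (γ : ℤ →₀ ℂ) (n : ℤ) (σ : ℤ → ℤ ⊕ ℤ) (u : Wab) :
    bilin M (SS γ n σ) u = γ.sum fun t c => c • bilin M (Finsupp.single (σ (n + t)) 1) u := by
  rw [SS, map_finsuppSum]
  rw [LinearMap.finsupp_sum_apply]
  exact Finsupp.sum_congr fun t _ => by rw [map_smul, LinearMap.smul_apply]

lemma bilin_SS_right (M : ℤ ⊕ ℤ → ℤ ⊕ ℤ → Wab) (γ : ℤ →₀ ℂ) (n : ℤ) (σ : ℤ → ℤ ⊕ ℤ) (u : Wab) :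
    bilin M u (SS γ n σ) = γ.sum fun t c => c • bilin M u (Finsupp.single (σ (n + t)) 1) := by
  rw [SS, map_finsuppSum]
  exact Finsupp.sum_congr fun t _ => by rw [map_smul]

lemma single_eq_smul (p : ℤ ⊕ ℤ) (c : ℂ) :
    (Finsupp.single p c : Wab) = c • Finsupp.single p 1 := by
  rw [Finsupp.smul_single, smul_eq_mul, mul_one]

lemma bilin_add_left (M : ℤ ⊕ ℤ → ℤ ⊕ ℤ → Wab) (x x' y : Wab) :
    bilin M (x + x') y = bilin M x y + bilin M x' y := by
  rw [map_add, LinearMap.add_apply]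

lemma bilin_add_right (M : ℤ ⊕ ℤ → ℤ ⊕ ℤ → Wab) (x y y' : Wab) :
    bilin M x (y + y') = bilin M x y + bilin M x y' := map_add _ _ _

lemma bilin_smul_left (M : ℤ ⊕ ℤ → ℤ ⊕ ℤ → Wab) (c : ℂ) (x y : Wab) :
    bilin M (c • x) y = c • bilin M x y := by
  rw [map_smul, LinearMap.smul_apply]

lemma bilin_smul_right (M : ℤ ⊕ ℤ → ℤ ⊕ ℤ → Wab) (c : ℂ) (x y : Wab) :
    bilin M x (c • y) = c • bilin M x y := map_smul _ _ _

lemma bilin_zero_left (M : ℤ ⊕ ℤ → ℤ ⊕ ℤ → Wab) (y : Wab) :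
    bilin M 0 y = 0 := by rw [map_zero, LinearMap.zero_apply]

lemma bilin_zero_right (M : ℤ ⊕ ℤ → ℤ ⊕ ℤ → Wab) (x : Wab) :
    bilin M x 0 = 0 := map_zero _

noncomputable def SS2 (γ δ : ℤ →₀ ℂ) (n : ℤ) (σ : ℤ → ℤ ⊕ ℤ) : Wab :=
  γ.sum fun t c => c • SS δ (n + t) σ

section MulLemmas
variable (α β : ℤ →₀ ℂ)

lemma mul_SSinl_L (γ : ℤ →₀ ℂ) (n k : ℤ) :
    bilin (wabBasicMul α β) (SS γ n Sum.inl) (Finsupp.single (Sum.inl k) 1) =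
      SS2 γ α (n + k) Sum.inl + SS2 γ β (n + k) Sum.inr := by
  rw [bilin_SS_left, SS2, SS2, ← Finsupp.sum_add]
  refine Finsupp.sum_congr fun t _ => ?_
  rw [bilin_single, one_mul, one_smul, wabBasicMul_ll, smul_add,
    show n + t + k = n + k + t by ring]

lemma mul_SSinl_I (γ : ℤ →₀ ℂ) (n k : ℤ) :
    bilin (wabBasicMul α β) (SS γ n Sum.inl) (Finsupp.single (Sum.inr k) 1) =
      SS2 γ α (n + k) Sum.inr := by
  rw [bilin_SS_left, SS2]
  refine Finsupp.sum_congr fun t _ => ?_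
  rw [bilin_single, one_mul, one_smul, wabBasicMul_li, show n + t + k = n + k + t by ring]

lemma mul_SSinr_L (γ : ℤ →₀ ℂ) (n k : ℤ) :
    bilin (wabBasicMul α β) (SS γ n Sum.inr) (Finsupp.single (Sum.inl k) 1) =
      SS2 γ α (n + k) Sum.inr := by
  rw [bilin_SS_left, SS2]
  refine Finsupp.sum_congr fun t _ => ?_
  rw [bilin_single, one_mul, one_smul, wabBasicMul_il, show n + t + k = n + k + t by ring]

lemma mul_SSinr_I (γ : ℤ →₀ ℂ) (n k : ℤ) :
    bilin (wabBasicMul α β) (SS γ n Sum.inr) (Finsupp.single (Sum.inr k) 1) = 0 := by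
  rw [bilin_SS_left]
  refine Finset.sum_eq_zero fun t _ => ?_
  simp only []
  rw [bilin_single, one_mul, one_smul, wabBasicMul_ii, smul_zero]

lemma mul_L_SSinl (γ : ℤ →₀ ℂ) (n k : ℤ) :
    bilin (wabBasicMul α β) (Finsupp.single (Sum.inl k) 1) (SS γ n Sum.inl) =
      SS2 γ α (k + n) Sum.inl + SS2 γ β (k + n) Sum.inr := by
  rw [bilin_SS_right, SS2, SS2, ← Finsupp.sum_add]
  refine Finsupp.sum_congr fun t _ => ?_
  rw [bilin_single, one_mul, one_smul, wabBasicMul_ll, smul_add,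
    show k + (n + t) = k + n + t by ring]

lemma mul_L_SSinr (γ : ℤ →₀ ℂ) (n k : ℤ) :
    bilin (wabBasicMul α β) (Finsupp.single (Sum.inl k) 1) (SS γ n Sum.inr) =
      SS2 γ α (k + n) Sum.inr := by
  rw [bilin_SS_right, SS2]
  refine Finsupp.sum_congr fun t _ => ?_
  rw [bilin_single, one_mul, one_smul, wabBasicMul_li, show k + (n + t) = k + n + t by ring]

lemma mul_I_SSinl (γ : ℤ →₀ ℂ) (n k : ℤ) :
    bilin (wabBasicMul α β) (Finsupp.single (Sum.inr k) 1) (SS γ n Sum.inl) =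
      SS2 γ α (k + n) Sum.inr := by
  rw [bilin_SS_right, SS2]
  refine Finsupp.sum_congr fun t _ => ?_
  rw [bilin_single, one_mul, one_smul, wabBasicMul_il, show k + (n + t) = k + n + t by ring]

lemma mul_I_SSinr (γ : ℤ →₀ ℂ) (n k : ℤ) :
    bilin (wabBasicMul α β) (Finsupp.single (Sum.inr k) 1) (SS γ n Sum.inr) = 0 := by
  rw [bilin_SS_right]
  refine Finset.sum_eq_zero fun t _ => ?_
  simp only []
  rw [bilin_single, one_mul, one_smul, wabBasicMul_ii, smul_zero]

lemma core_assoc (p q r : ℤ ⊕ ℤ) :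
    bilin (wabBasicMul α β) (wabBasicMul α β p q) (Finsupp.single r 1) =
      bilin (wabBasicMul α β) (Finsupp.single p 1) (wabBasicMul α β q r) := by
  obtain (i | i) := p <;> obtain (j | j) := q <;> obtain (k | k) := r
  · rw [wabBasicMul_ll, wabBasicMul_ll, bilin_add_left, bilin_add_right,
      mul_SSinl_L, mul_SSinr_L, mul_L_SSinl, mul_L_SSinr,
      show i + j + k = i + (j + k) by ring]
  · rw [wabBasicMul_ll, wabBasicMul_li, bilin_add_left, mul_SSinl_I, mul_SSinr_I, add_zero,
      mul_L_SSinr, show i + j + k = i + (j + k) by ring]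
  · rw [wabBasicMul_li, wabBasicMul_il, mul_SSinr_L, mul_L_SSinr,
      show i + j + k = i + (j + k) by ring]
  · rw [wabBasicMul_li, wabBasicMul_ii, mul_SSinr_I, bilin_zero_right]
  · rw [wabBasicMul_il, wabBasicMul_ll, mul_SSinr_L, bilin_add_right, mul_I_SSinl, mul_I_SSinr,
      add_zero, show i + j + k = i + (j + k) by ring]
  · rw [wabBasicMul_il, wabBasicMul_li, mul_SSinr_I, mul_I_SSinr]
  · rw [wabBasicMul_ii, wabBasicMul_il, bilin_zero_left, mul_I_SSinr]
  · rw [wabBasicMul_ii, wabBasicMul_ii, bilin_zero_left, bilin_zero_right]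

end MulLemmas

section Ext
variable (α β : ℤ →₀ ℂ)

lemma basicMul_comm (p q : ℤ ⊕ ℤ) : wabBasicMul α β p q = wabBasicMul α β q p := by
  obtain (i | i) := p <;> obtain (j | j) := q <;>
    simp [wabBasicMul, add_comm i j]

lemma wabMul_comm' (x y : Wab) : bilin (wabBasicMul α β) x y = bilin (wabBasicMul α β) y x := by
  have : bilin (wabBasicMul α β) = (bilin (wabBasicMul α β)).flip := by
    refine Finsupp.lhom_ext fun p c => ?_
    refine Finsupp.lhom_ext fun q d => ?_
    rw [LinearMap.flip_apply, bilin_single, bilin_single, basicMul_comm, mul_comm c d]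
  conv_lhs => rw [this]
  rfl

lemma mul_assoc' (x y z : Wab) :
    bilin (wabBasicMul α β) (bilin (wabBasicMul α β) x y) z =
      bilin (wabBasicMul α β) x (bilin (wabBasicMul α β) y z) := by
  induction x using Finsupp.induction_linear with
  | zero => simp only [bilin_zero_left, bilin_zero_right]
  | add f g hf hg => rw [bilin_add_left, bilin_add_left, bilin_add_left, hf, hg]
  | single p c =>
    induction y using Finsupp.induction_linear with
    | zero => simp only [bilin_zero_left, bilin_zero_right]
    | add f g hf hg => rw [bilin_add_right, bilin_add_left, bilin_add_left,
        bilin_add_right, hf, hg]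
    | single q d =>
      induction z using Finsupp.induction_linear with
      | zero => simp only [bilin_zero_left, bilin_zero_right]
      | add f g hf hg => rw [bilin_add_right, bilin_add_right, bilin_add_right, hf, hg]
      | single r e =>
        rw [single_eq_smul p c, single_eq_smul q d, single_eq_smul r e]
        simp only [bilin_smul_left, bilin_smul_right, bilin_single, one_mul, one_smul,
          smul_smul]
        rw [core_assoc]
        congr 1
        ring
end Ext

noncomputable def WS (γ : ℤ →₀ ℂ) (w : ℤ → ℂ) (n : ℤ) (σ : ℤ → ℤ ⊕ ℤ) : Wab :=
  γ.sum fun t c => (c * w t) • Finsupp.single (σ (n + t)) (1 : ℂ)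

lemma WS_add (γ : ℤ →₀ ℂ) (w1 w2 : ℤ → ℂ) (n : ℤ) (σ : ℤ → ℤ ⊕ ℤ) :
    WS γ w1 n σ + WS γ w2 n σ = WS γ (fun t => w1 t + w2 t) n σ := by
  rw [WS, WS, WS, ← Finsupp.sum_add]
  refine Finsupp.sum_congr fun t _ => ?_
  rw [← add_smul, mul_add]

lemma WS_congr (γ : ℤ →₀ ℂ) (w1 w2 : ℤ → ℂ) (n m : ℤ) (σ : ℤ → ℤ ⊕ ℤ)
    (hw : ∀ t, w1 t = w2 t) (hn : n = m) : WS γ w1 n σ = WS γ w2 m σ := by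
  subst hn
  exact Finsupp.sum_congr fun t _ => by rw [hw]

lemma smul_SS (c : ℂ) (γ : ℤ →₀ ℂ) (n : ℤ) (σ : ℤ → ℤ ⊕ ℤ) :
    c • SS γ n σ = WS γ (fun _ => c) n σ := by
  rw [SS, WS, Finsupp.smul_sum]
  refine Finsupp.sum_congr fun t _ => ?_
  rw [smul_smul, mul_comm]

section BrLemmas
variable (a b : ℂ)

lemma wabBasic_ll (m n : ℤ) : wabBasic a b (Sum.inl m) (Sum.inl n) =
    (((m : ℂ) - (n : ℂ))) • Finsupp.single (Sum.inl (m + n)) (1 : ℂ) := rfl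
lemma wabBasic_li (m n : ℤ) : wabBasic a b (Sum.inl m) (Sum.inr n) =
    (-((n : ℂ) + a + b * (m : ℂ))) • Finsupp.single (Sum.inr (m + n)) (1 : ℂ) := rfl
lemma wabBasic_il (m n : ℤ) : wabBasic a b (Sum.inr m) (Sum.inl n) =
    (((m : ℂ) + a + b * (n : ℂ))) • Finsupp.single (Sum.inr (m + n)) (1 : ℂ) := rfl
lemma wabBasic_ii (m n : ℤ) : wabBasic a b (Sum.inr m) (Sum.inr n) = 0 := rfl

lemma br_SSinl_L (γ : ℤ →₀ ℂ) (n q : ℤ) :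
    bilin (wabBasic a b) (SS γ n Sum.inl) (Finsupp.single (Sum.inl q) 1) =
      WS γ (fun t => ((n : ℂ) + t - q)) (n + q) Sum.inl := by
  rw [bilin_SS_left, WS]
  refine Finsupp.sum_congr fun t _ => ?_
  rw [bilin_single, one_mul, one_smul, wabBasic_ll, smul_smul,
    show n + t + q = n + q + t by ring]
  push_cast
  ring_nf

lemma br_SSinl_I (γ : ℤ →₀ ℂ) (n q : ℤ) :
    bilin (wabBasic a b) (SS γ n Sum.inl) (Finsupp.single (Sum.inr q) 1) =
      WS γ (fun t => -((q : ℂ) + a + b * ((n : ℂ) + t))) (n + q) Sum.inr := by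
  rw [bilin_SS_left, WS]
  refine Finsupp.sum_congr fun t _ => ?_
  rw [bilin_single, one_mul, one_smul, wabBasic_li, smul_smul,
    show n + t + q = n + q + t by ring]
  push_cast
  ring_nf

lemma br_SSinr_L (γ : ℤ →₀ ℂ) (n q : ℤ) :
    bilin (wabBasic a b) (SS γ n Sum.inr) (Finsupp.single (Sum.inl q) 1) =
      WS γ (fun t => ((n : ℂ) + t + a + b * q)) (n + q) Sum.inr := by
  rw [bilin_SS_left, WS]
  refine Finsupp.sum_congr fun t _ => ?_
  rw [bilin_single, one_mul, one_smul, wabBasic_il, smul_smul,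
    show n + t + q = n + q + t by ring]
  push_cast
  ring_nf

lemma br_SSinr_I (γ : ℤ →₀ ℂ) (n q : ℤ) :
    bilin (wabBasic a b) (SS γ n Sum.inr) (Finsupp.single (Sum.inr q) 1) = 0 := by
  rw [bilin_SS_left]
  refine Finset.sum_eq_zero fun t _ => ?_
  simp only []
  rw [bilin_single, one_mul, one_smul, wabBasic_ii, smul_zero]

lemma br_L_SSinl (γ : ℤ →₀ ℂ) (n q : ℤ) :
    bilin (wabBasic a b) (Finsupp.single (Sum.inl q) 1) (SS γ n Sum.inl) =
      WS γ (fun t => ((q : ℂ) - (n + t))) (q + n) Sum.inl := by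
  rw [bilin_SS_right, WS]
  refine Finsupp.sum_congr fun t _ => ?_
  rw [bilin_single, one_mul, one_smul, wabBasic_ll, smul_smul,
    show q + (n + t) = q + n + t by ring]
  push_cast
  ring_nf

lemma br_L_SSinr (γ : ℤ →₀ ℂ) (n q : ℤ) :
    bilin (wabBasic a b) (Finsupp.single (Sum.inl q) 1) (SS γ n Sum.inr) =
      WS γ (fun t => -(((n : ℂ) + t) + a + b * q)) (q + n) Sum.inr := by
  rw [bilin_SS_right, WS]
  refine Finsupp.sum_congr fun t _ => ?_
  rw [bilin_single, one_mul, one_smul, wabBasic_li, smul_smul,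
    show q + (n + t) = q + n + t by ring]
  push_cast
  ring_nf

lemma br_I_SSinl (γ : ℤ →₀ ℂ) (n q : ℤ) :
    bilin (wabBasic a b) (Finsupp.single (Sum.inr q) 1) (SS γ n Sum.inl) =
      WS γ (fun t => ((q : ℂ) + a + b * ((n : ℂ) + t))) (q + n) Sum.inr := by
  rw [bilin_SS_right, WS]
  refine Finsupp.sum_congr fun t _ => ?_
  rw [bilin_single, one_mul, one_smul, wabBasic_il, smul_smul,
    show q + (n + t) = q + n + t by ring]
  push_cast
  ring_nf

lemma br_I_SSinr (γ : ℤ →₀ ℂ) (n q : ℤ) :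
    bilin (wabBasic a b) (Finsupp.single (Sum.inr q) 1) (SS γ n Sum.inr) = 0 := by
  rw [bilin_SS_right]
  refine Finset.sum_eq_zero fun t _ => ?_
  simp only []
  rw [bilin_single, one_mul, one_smul, wabBasic_ii, smul_zero]

end BrLemmas

section Compat
variable (a : ℂ) (α β : ℤ →₀ ℂ)

lemma core_compat (r p q : ℤ ⊕ ℤ) :
    (2 : ℂ) • bilin (wabBasicMul α β) (Finsupp.single r 1) (wabBasic a (-1) p q) =
      bilin (wabBasic a (-1)) (wabBasicMul α β r p) (Finsupp.single q 1) +
      bilin (wabBasic a (-1)) (Finsupp.single p 1) (wabBasicMul α β r q) := by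
  obtain (k | k) := r <;> obtain (m | m) := p <;> obtain (n | n) := q
  · -- L L L
    rw [wabBasic_ll, bilin_smul_right, bilin_single, one_mul, one_smul, wabBasicMul_ll,
      smul_smul, smul_add, smul_SS, smul_SS,
      wabBasicMul_ll, wabBasicMul_ll, bilin_add_left, bilin_add_right,
      br_SSinl_L, br_SSinr_L, br_L_SSinl, br_L_SSinr, add_add_add_comm,
      show k + m + n = k + (m + n) by ring, show m + (k + n) = k + (m + n) by ring,
      WS_add, WS_add]
    congr 1 <;> refine WS_congr _ _ _ _ _ _ (fun t => by push_cast; ring) rfl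
  · -- L L I
    rw [wabBasic_li, bilin_smul_right, bilin_single, one_mul, one_smul, wabBasicMul_li,
      smul_smul, smul_SS,
      wabBasicMul_ll, wabBasicMul_li, bilin_add_left, br_SSinl_I, br_SSinr_I, add_zero,
      br_L_SSinr,
      show k + m + n = k + (m + n) by ring, show m + (k + n) = k + (m + n) by ring,
      WS_add]
    refine WS_congr _ _ _ _ _ _ (fun t => by push_cast; ring) rfl
  · -- L I L
    rw [wabBasic_il, bilin_smul_right, bilin_single, one_mul, one_smul, wabBasicMul_li,
      smul_smul, smul_SS,
      wabBasicMul_li, wabBasicMul_ll, br_SSinr_L, bilin_add_right, br_I_SSinl, br_I_SSinr,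
      add_zero,
      show k + m + n = k + (m + n) by ring, show m + (k + n) = k + (m + n) by ring,
      WS_add]
    refine WS_congr _ _ _ _ _ _ (fun t => by push_cast; ring) rfl
  · -- L I I
    rw [wabBasic_ii, bilin_zero_right, smul_zero, wabBasicMul_li, wabBasicMul_li,
      br_SSinr_I, br_I_SSinr, add_zero]
  · -- I L L
    rw [wabBasic_ll, bilin_smul_right, bilin_single, one_mul, one_smul, wabBasicMul_il,
      smul_smul, smul_SS,
      wabBasicMul_il, wabBasicMul_il, br_SSinr_L, br_L_SSinr,
      show k + m + n = k + (m + n) by ring, show m + (k + n) = k + (m + n) by ring,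
      WS_add]
    refine WS_congr _ _ _ _ _ _ (fun t => by push_cast; ring) rfl
  · -- I L I
    rw [wabBasic_li, bilin_smul_right, bilin_single, one_mul, one_smul, wabBasicMul_ii,
      smul_zero, smul_zero, wabBasicMul_il, wabBasicMul_ii, br_SSinr_I, bilin_zero_right,
      add_zero]
  · -- I I L
    rw [wabBasic_il, bilin_smul_right, bilin_single, one_mul, one_smul, wabBasicMul_ii,
      smul_zero, smul_zero, wabBasicMul_ii, wabBasicMul_il, bilin_zero_left, br_I_SSinr,
      add_zero]
  · -- I I I
    rw [wabBasic_ii, bilin_zero_right, smul_zero, wabBasicMul_ii, wabBasicMul_ii,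
      bilin_zero_left, bilin_zero_right, add_zero]

lemma compat' (x y z : Wab) :
    (2 : ℂ) • bilin (wabBasicMul α β) z (bilin (wabBasic a (-1)) x y) =
      bilin (wabBasic a (-1)) (bilin (wabBasicMul α β) z x) y +
      bilin (wabBasic a (-1)) x (bilin (wabBasicMul α β) z y) := by
  induction z using Finsupp.induction_linear with
  | zero => simp only [bilin_zero_left, bilin_zero_right, smul_zero, add_zero]
  | add f g hf hg =>
    simp only [bilin_add_left, bilin_add_right, smul_add] at *
    rw [hf, hg]; abel
  | single r c =>
    induction x using Finsupp.induction_linear with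
    | zero => simp only [bilin_zero_left, bilin_zero_right, smul_zero, add_zero, zero_add]
    | add f g hf hg =>
      simp only [bilin_add_left, bilin_add_right, smul_add] at *
      rw [hf, hg]; abel
    | single p d =>
      induction y using Finsupp.induction_linear with
      | zero => simp only [bilin_zero_left, bilin_zero_right, smul_zero, add_zero, zero_add]
      | add f g hf hg =>
        simp only [bilin_add_left, bilin_add_right, smul_add] at *
        rw [hf, hg]; abel
      | single q e =>
        have h := core_compat a α β r p q
        rw [single_eq_smul r c, single_eq_smul p d, single_eq_smul q e]
        simp only [bilin_smul_left, bilin_smul_right, bilin_single, one_mul, one_smul,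
          smul_smul]
        rw [show (2 : ℂ) * (e * d * c) = (e * d * c) * 2 by ring, ← smul_smul, h,
          smul_add]
        congr 1 <;> · congr 1; ring

end Compat

section Eval
variable (a b : ℂ)

lemma ev_fL_inl (f : Wab) (n j : ℤ) :
    (bilin (wabBasic a b) f (Finsupp.single (Sum.inl n) 1)) (Sum.inl j) =
      ((j : ℂ) - 2 * n) * f (Sum.inl (j - n)) := by
  induction f using Finsupp.induction_linear with
  | zero => simp [bilin_zero_left]
  | add f g hf hg => rw [bilin_add_left, Finsupp.add_apply, Finsupp.add_apply, hf, hg]; ring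
  | single p c =>
    obtain (t | t) := p
    · rw [bilin_single, wabBasic_ll]
      simp only [Finsupp.smul_apply, Finsupp.single_apply, smul_eq_mul, Sum.inl.injEq, mul_one]
      by_cases h : t = j - n
      · subst h
        rw [if_pos (by omega), if_pos rfl]
        push_cast
        ring
      · rw [if_neg (by omega), if_neg (by simpa using h)]
        ring
    · rw [bilin_single, wabBasic_il]
      simp [Finsupp.single_apply]

lemma ev_fL_inr (f : Wab) (n j : ℤ) :
    (bilin (wabBasic a b) f (Finsupp.single (Sum.inl n) 1)) (Sum.inr j) =
      ((j : ℂ) - n + a + b * n) * f (Sum.inr (j - n)) := by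
  induction f using Finsupp.induction_linear with
  | zero => simp [bilin_zero_left]
  | add f g hf hg => rw [bilin_add_left, Finsupp.add_apply, Finsupp.add_apply, hf, hg]; ring
  | single p c =>
    obtain (t | t) := p
    · rw [bilin_single, wabBasic_ll]
      simp [Finsupp.single_apply]
    · rw [bilin_single, wabBasic_il]
      simp only [Finsupp.smul_apply, Finsupp.single_apply, smul_eq_mul, Sum.inr.injEq, mul_one]
      by_cases h : t = j - n
      · subst h
        rw [if_pos (by omega), if_pos rfl]
        push_cast
        ring
      · rw [if_neg (by omega), if_neg (by simpa using h)]
        ring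

lemma ev_fI_inl (f : Wab) (n j : ℤ) :
    (bilin (wabBasic a b) f (Finsupp.single (Sum.inr n) 1)) (Sum.inl j) = 0 := by
  induction f using Finsupp.induction_linear with
  | zero => simp [bilin_zero_left]
  | add f g hf hg => rw [bilin_add_left, Finsupp.add_apply, hf, hg, add_zero]
  | single p c =>
    obtain (t | t) := p
    · rw [bilin_single, wabBasic_li]
      simp [Finsupp.single_apply]
    · rw [bilin_single, wabBasic_ii]
      simp

lemma ev_fI_inr (f : Wab) (n j : ℤ) :
    (bilin (wabBasic a b) f (Finsupp.single (Sum.inr n) 1)) (Sum.inr j) =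
      (-((n : ℂ) + a + b * ((j : ℂ) - n))) * f (Sum.inl (j - n)) := by
  induction f using Finsupp.induction_linear with
  | zero => simp [bilin_zero_left]
  | add f g hf hg => rw [bilin_add_left, Finsupp.add_apply, Finsupp.add_apply, hf, hg]; ring
  | single p c =>
    obtain (t | t) := p
    · rw [bilin_single, wabBasic_li]
      simp only [Finsupp.smul_apply, Finsupp.single_apply, smul_eq_mul, Sum.inr.injEq,
        Sum.inl.injEq, mul_one]
      by_cases h : t = j - n
      · subst h
        rw [if_pos (by omega), if_pos rfl]
        push_cast
        ring
      · rw [if_neg (by omega), if_neg (by simpa using h)]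
        ring
    · rw [bilin_single, wabBasic_ii]
      simp [Finsupp.single_apply]

lemma ev_Lf_inl (f : Wab) (n j : ℤ) :
    (bilin (wabBasic a b) (Finsupp.single (Sum.inl n) 1) f) (Sum.inl j) =
      (2 * (n : ℂ) - j) * f (Sum.inl (j - n)) := by
  induction f using Finsupp.induction_linear with
  | zero => simp [bilin_zero_right]
  | add f g hf hg => rw [bilin_add_right, Finsupp.add_apply, Finsupp.add_apply, hf, hg]; ring
  | single q c =>
    obtain (t | t) := q
    · rw [bilin_single, wabBasic_ll]
      simp only [Finsupp.smul_apply, Finsupp.single_apply, smul_eq_mul, Sum.inl.injEq,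
        one_mul]
      by_cases h : t = j - n
      · subst h
        rw [if_pos (by omega), if_pos rfl]
        push_cast
        ring
      · rw [if_neg (by omega), if_neg (by simpa using h)]
        ring
    · rw [bilin_single, wabBasic_li]
      simp [Finsupp.single_apply]

lemma ev_Lf_inr (f : Wab) (n j : ℤ) :
    (bilin (wabBasic a b) (Finsupp.single (Sum.inl n) 1) f) (Sum.inr j) =
      (-(((j : ℂ) - n) + a + b * n)) * f (Sum.inr (j - n)) := by
  induction f using Finsupp.induction_linear with
  | zero => simp [bilin_zero_right]
  | add f g hf hg => rw [bilin_add_right, Finsupp.add_apply, Finsupp.add_apply, hf, hg]; ring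
  | single q c =>
    obtain (t | t) := q
    · rw [bilin_single, wabBasic_ll]
      simp [Finsupp.single_apply]
    · rw [bilin_single, wabBasic_li]
      simp only [Finsupp.smul_apply, Finsupp.single_apply, smul_eq_mul, Sum.inr.injEq,
        one_mul]
      by_cases h : t = j - n
      · subst h
        rw [if_pos (by omega), if_pos rfl]
        push_cast
        ring
      · rw [if_neg (by omega), if_neg (by simpa using h)]
        ring

end Eval

section Half
variable (a : ℂ) (φ : Wab →ₗ[ℂ] Wab)

local notation "Bas" => wabBasic a (-1)
local notation "BR" => bilin (wabBasic a (-1))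

def HalfDer (a : ℂ) (φ : Wab →ₗ[ℂ] Wab) : Prop :=
  ∀ x y : Wab, (2 : ℂ) • φ (bilin (wabBasic a (-1)) x y) =
    bilin (wabBasic a (-1)) (φ x) y + bilin (wabBasic a (-1)) x (φ y)

lemma eqA (hd : HalfDer a φ) (u v j : ℤ) :
    2 * ((u : ℂ) - v) * (φ (Finsupp.single (Sum.inl (u + v)) 1)) (Sum.inl j) =
      ((j : ℂ) - 2 * v) * (φ (Finsupp.single (Sum.inl u) 1)) (Sum.inl (j - v)) +
      (2 * (u : ℂ) - j) * (φ (Finsupp.single (Sum.inl v) 1)) (Sum.inl (j - u)) := by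
  have h := hd (Finsupp.single (Sum.inl u) 1) (Finsupp.single (Sum.inl v) 1)
  rw [bilin_single, one_mul, one_smul, wabBasic_ll, map_smul] at h
  have h2 := DFunLike.congr_fun h (Sum.inl j)
  rw [Finsupp.smul_apply, Finsupp.smul_apply, Finsupp.add_apply,
    ev_fL_inl, ev_Lf_inl] at h2
  rw [smul_eq_mul, smul_eq_mul, ← mul_assoc] at h2
  exact h2

lemma eqB (hd : HalfDer a φ) (u v j : ℤ) :
    2 * ((u : ℂ) - v) * (φ (Finsupp.single (Sum.inl (u + v)) 1)) (Sum.inr j) =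
      ((j : ℂ) - v + a + (-1) * v) * (φ (Finsupp.single (Sum.inl u) 1)) (Sum.inr (j - v)) +
      (-(((j : ℂ) - u) + a + (-1) * u)) * (φ (Finsupp.single (Sum.inl v) 1)) (Sum.inr (j - u)) := by
  have h := hd (Finsupp.single (Sum.inl u) 1) (Finsupp.single (Sum.inl v) 1)
  rw [bilin_single, one_mul, one_smul, wabBasic_ll, map_smul] at h
  have h2 := DFunLike.congr_fun h (Sum.inr j)
  rw [Finsupp.smul_apply, Finsupp.smul_apply, Finsupp.add_apply,
    ev_fL_inr, ev_Lf_inr] at h2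
  rw [smul_eq_mul, smul_eq_mul, ← mul_assoc] at h2
  exact h2

lemma eqC (hd : HalfDer a φ) (u v j : ℤ) :
    2 * (-((v : ℂ) + a + (-1) * u)) * (φ (Finsupp.single (Sum.inr (u + v)) 1)) (Sum.inl j) =
      (2 * (u : ℂ) - j) * (φ (Finsupp.single (Sum.inr v) 1)) (Sum.inl (j - u)) := by
  have h := hd (Finsupp.single (Sum.inl u) 1) (Finsupp.single (Sum.inr v) 1)
  rw [bilin_single, one_mul, one_smul, wabBasic_li, map_smul] at h
  have h2 := DFunLike.congr_fun h (Sum.inl j)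
  rw [Finsupp.smul_apply, Finsupp.smul_apply, Finsupp.add_apply,
    ev_fI_inl, ev_Lf_inl, zero_add] at h2
  rw [smul_eq_mul, smul_eq_mul, ← mul_assoc] at h2
  exact h2

lemma eqD (hd : HalfDer a φ) (u v j : ℤ) :
    2 * (-((v : ℂ) + a + (-1) * u)) * (φ (Finsupp.single (Sum.inr (u + v)) 1)) (Sum.inr j) =
      (-((v : ℂ) + a + (-1) * ((j : ℂ) - v))) *
        (φ (Finsupp.single (Sum.inl u) 1)) (Sum.inl (j - v)) +
      (-(((j : ℂ) - u) + a + (-1) * u)) * (φ (Finsupp.single (Sum.inr v) 1)) (Sum.inr (j - u)) := by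
  have h := hd (Finsupp.single (Sum.inl u) 1) (Finsupp.single (Sum.inr v) 1)
  rw [bilin_single, one_mul, one_smul, wabBasic_li, map_smul] at h
  have h2 := DFunLike.congr_fun h (Sum.inr j)
  rw [Finsupp.smul_apply, Finsupp.smul_apply, Finsupp.add_apply,
    ev_fI_inr, ev_Lf_inr] at h2
  rw [smul_eq_mul, smul_eq_mul, ← mul_assoc] at h2
  exact h2

end Half

section SLemmas
variable (a : ℂ) (φ : Wab →ₗ[ℂ] Wab)

lemma cast_ne (u v : ℤ) (h : u ≠ v) : (u : ℂ) ≠ (v : ℂ) :=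
  fun hh => h (by exact_mod_cast hh)

lemma exists_uv (n : ℤ) : ∃ u v : ℤ, u + v = n ∧ u ≠ 0 ∧ v ≠ 0 ∧ u ≠ v := by
  by_cases hn : n = -1 ∨ n = -2
  · exact ⟨1, n - 1, by omega, by omega, by omega, by omega⟩
  · exact ⟨-1, n + 1, by omega, by omega, by omega, by omega⟩

lemma SA (hd : HalfDer a φ) (n j : ℤ) :
    (φ (Finsupp.single (Sum.inl n) 1)) (Sum.inl j) =
      (φ (Finsupp.single (Sum.inl 0) 1)) (Sum.inl (j - n)) := by
  have gen : ∀ n j : ℤ, j ≠ 2 * n →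
      (φ (Finsupp.single (Sum.inl n) 1)) (Sum.inl j) =
        (φ (Finsupp.single (Sum.inl 0) 1)) (Sum.inl (j - n)) := by
    intro n j hne
    have h := eqA a φ hd 0 n j
    rw [zero_add, sub_zero] at h
    have hc : ((j : ℂ) - 2 * n) ≠ 0 := by
      intro hh
      have : (j : ℂ) = ((2 * n : ℤ) : ℂ) := by push_cast; linear_combination hh
      exact hne (by exact_mod_cast this)
    apply mul_left_cancel₀ hc
    push_cast at h ⊢
    linear_combination h
  by_cases hj : j ≠ 2 * n
  · exact gen n j hj
  · push_neg at hj
    subst hj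
    obtain ⟨u, v, huv, hu0, hv0, hne⟩ := exists_uv n
    have h := eqA a φ hd u v (2 * n)
    rw [huv] at h
    rw [gen u (2 * n - v) (by omega), gen v (2 * n - u) (by omega)] at h
    rw [show 2 * n - v - u = n by omega, show 2 * n - u - v = n by omega] at h
    have hc : (2 : ℂ) * ((u : ℂ) - v) ≠ 0 :=
      mul_ne_zero two_ne_zero (sub_ne_zero.mpr (cast_ne u v hne))
    rw [show 2 * n - n = n by ring]
    apply mul_left_cancel₀ hc
    push_cast at h ⊢
    linear_combination h

lemma SB (hd : HalfDer a φ) (n j : ℤ) :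
    (φ (Finsupp.single (Sum.inl n) 1)) (Sum.inr j) =
      (φ (Finsupp.single (Sum.inl 0) 1)) (Sum.inr (j - n)) := by
  have gen : ∀ n j : ℤ, (j : ℂ) + a - 2 * n ≠ 0 →
      (φ (Finsupp.single (Sum.inl n) 1)) (Sum.inr j) =
        (φ (Finsupp.single (Sum.inl 0) 1)) (Sum.inr (j - n)) := by
    intro n j hne
    have h := eqB a φ hd 0 n j
    rw [zero_add, sub_zero] at h
    apply mul_left_cancel₀ hne
    push_cast at h ⊢
    linear_combination h
  by_cases hj : (j : ℂ) + a - 2 * n ≠ 0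
  · exact gen n j hj
  · push_neg at hj
    obtain ⟨u, v, huv, hu0, hv0, hne⟩ := exists_uv n
    have hcast : (u : ℂ) + v = n := by exact_mod_cast congrArg (Int.cast : ℤ → ℂ) huv
    have hne1 : ((j - v : ℤ) : ℂ) + a - 2 * u ≠ 0 := by
      push_cast
      intro hh
      exact cast_ne v 0 hv0 (by push_cast; linear_combination hh - hj + 2 * hcast)
    have hne2 : ((j - u : ℤ) : ℂ) + a - 2 * v ≠ 0 := by
      push_cast
      intro hh
      exact cast_ne u 0 hu0 (by push_cast; linear_combination hh - hj + 2 * hcast)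
    have h := eqB a φ hd u v j
    rw [huv, gen u (j - v) hne1, gen v (j - u) hne2,
      show j - v - u = j - n by omega, show j - u - v = j - n by omega] at h
    have hc : (2 : ℂ) * ((u : ℂ) - v) ≠ 0 :=
      mul_ne_zero two_ne_zero (sub_ne_zero.mpr (cast_ne u v hne))
    apply mul_left_cancel₀ hc
    push_cast at h ⊢
    linear_combination h

lemma SC (hd : HalfDer a φ) (n j : ℤ) :
    (φ (Finsupp.single (Sum.inr n) 1)) (Sum.inl j) = 0 := by
  have gen : ∀ n j : ℤ, (j : ℂ) - 2 * n - 2 * a ≠ 0 →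
      (φ (Finsupp.single (Sum.inr n) 1)) (Sum.inl j) = 0 := by
    intro n j hne
    have h := eqC a φ hd 0 n j
    rw [zero_add, sub_zero] at h
    apply mul_left_cancel₀ hne
    push_cast at h ⊢
    linear_combination h
  by_cases hj : (j : ℂ) - 2 * n - 2 * a ≠ 0
  · exact gen n j hj
  · push_neg at hj
    have hex : ∃ u : ℤ, u ≠ 0 ∧ j ≠ 4 * u := by
      by_cases h4 : j = 4
      · exact ⟨2, by omega, by omega⟩
      · exact ⟨1, by omega, by omega⟩
    obtain ⟨u, hu0, hju⟩ := hex
    set v : ℤ := n - u with hv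
    have hcast : (v : ℂ) = (n : ℂ) - u := by rw [hv]; push_cast; ring
    have hne1 : ((j - u : ℤ) : ℂ) - 2 * v - 2 * a ≠ 0 := by
      push_cast
      intro hh
      exact cast_ne u 0 hu0 (by push_cast; linear_combination hh - hj + 2 * hcast)
    have h := eqC a φ hd u v j
    rw [show u + v = n by omega, gen v (j - u) hne1, mul_zero] at h
    have hc : 2 * (-((v : ℂ) + a + (-1) * u)) ≠ 0 := by
      refine mul_ne_zero two_ne_zero (fun hh => ?_)
      have h4 : ((4 * u - j : ℤ) : ℂ) = 0 := by
        push_cast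
        linear_combination 2 * hh - hj + 2 * hcast
      have : 4 * u - j = 0 := by exact_mod_cast h4
      omega
    exact (mul_eq_zero.mp h).resolve_left hc

lemma SD (hd : HalfDer a φ) (n j : ℤ) :
    (φ (Finsupp.single (Sum.inr n) 1)) (Sum.inr j) =
      (φ (Finsupp.single (Sum.inl 0) 1)) (Sum.inl (j - n)) := by
  have gen : ∀ n j : ℤ, (j : ℂ) - 2 * n - a ≠ 0 →
      (φ (Finsupp.single (Sum.inr n) 1)) (Sum.inr j) =
        (φ (Finsupp.single (Sum.inl 0) 1)) (Sum.inl (j - n)) := by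
    intro n j hne
    have h := eqD a φ hd 0 n j
    rw [zero_add, sub_zero] at h
    apply mul_left_cancel₀ hne
    push_cast at h ⊢
    linear_combination h
  by_cases hj : (j : ℂ) - 2 * n - a ≠ 0
  · exact gen n j hj
  · push_neg at hj
    have hex : ∃ u : ℤ, u ≠ 0 ∧ j ≠ 2 * u + n := by
      by_cases h2 : j - n = 2
      · exact ⟨2, by omega, by omega⟩
      · exact ⟨1, by omega, by omega⟩
    obtain ⟨u, hu0, hju⟩ := hex
    set v : ℤ := n - u with hv
    have hcast : (v : ℂ) = (n : ℂ) - u := by rw [hv]; push_cast; ring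
    have hne2 : ((j - u : ℤ) : ℂ) - 2 * v - a ≠ 0 := by
      push_cast
      intro hh
      exact cast_ne u 0 hu0 (by push_cast; linear_combination hh - hj + 2 * hcast)
    have h := eqD a φ hd u v j
    rw [show u + v = n by omega, SA a φ hd u (j - v), gen v (j - u) hne2,
      show j - v - u = j - n by omega, show j - u - v = j - n by omega] at h
    have hc : 2 * (-((v : ℂ) + a + (-1) * u)) ≠ 0 := by
      refine mul_ne_zero two_ne_zero (fun hh => ?_)
      have h4 : ((2 * u + n - j : ℤ) : ℂ) = 0 := by
        push_cast
        linear_combination hh - hj + hcast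
      have : 2 * u + n - j = 0 := by exact_mod_cast h4
      omega
    apply mul_left_cancel₀ hc
    push_cast at h ⊢
    linear_combination h

end SLemmas

section Assemble

lemma shift_inj (σ : ℤ → ℤ ⊕ ℤ) (hσ : Function.Injective σ) (n : ℤ) :
    Function.Injective fun t : ℤ => σ (n + t) := fun s t h => by
  have := hσ h
  omega

lemma sum_shift_eq_mapDomain (γ : ℤ →₀ ℂ) (n : ℤ) (σ : ℤ → ℤ ⊕ ℤ) :
    (γ.sum fun t c => c • Finsupp.single (σ (n + t)) (1 : ℂ)) =
      Finsupp.mapDomain (fun t => σ (n + t)) γ := by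
  rw [Finsupp.mapDomain]
  exact Finsupp.sum_congr fun t _ => by rw [Finsupp.smul_single, smul_eq_mul, mul_one]

lemma ev_shift_inl_inl (γ : ℤ →₀ ℂ) (n k : ℤ) :
    (γ.sum fun t c => c • Finsupp.single (Sum.inl (n + t)) (1 : ℂ) : Wab) (Sum.inl k) = γ (k - n) := by
  rw [sum_shift_eq_mapDomain]
  have h : (Sum.inl k : ℤ ⊕ ℤ) = (fun t : ℤ => (Sum.inl (n + t) : ℤ ⊕ ℤ)) (k - n) := by
    simp [show n + (k - n) = k by omega]
  rw [h, Finsupp.mapDomain_apply (shift_inj _ Sum.inl_injective n)]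

lemma ev_shift_inl_inr (γ : ℤ →₀ ℂ) (n k : ℤ) :
    (γ.sum fun t c => c • Finsupp.single (Sum.inl (n + t)) (1 : ℂ) : Wab) (Sum.inr k) = 0 := by
  rw [sum_shift_eq_mapDomain]
  exact Finsupp.mapDomain_notin_range _ _ (by simp)

lemma ev_shift_inr_inr (γ : ℤ →₀ ℂ) (n k : ℤ) :
    (γ.sum fun t c => c • Finsupp.single (Sum.inr (n + t)) (1 : ℂ) : Wab) (Sum.inr k) = γ (k - n) := by
  rw [sum_shift_eq_mapDomain]
  have h : (Sum.inr k : ℤ ⊕ ℤ) = (fun t : ℤ => (Sum.inr (n + t) : ℤ ⊕ ℤ)) (k - n) := by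
    simp [show n + (k - n) = k by omega]
  rw [h, Finsupp.mapDomain_apply (shift_inj _ Sum.inr_injective n)]

lemma ev_shift_inr_inl (γ : ℤ →₀ ℂ) (n k : ℤ) :
    (γ.sum fun t c => c • Finsupp.single (Sum.inr (n + t)) (1 : ℂ) : Wab) (Sum.inl k) = 0 := by
  rw [sum_shift_eq_mapDomain]
  exact Finsupp.mapDomain_notin_range _ _ (by simp)

end Assemble

/-- Every transposed Poisson multiplication on `𝒲(a,-1)` is given
on basis elements by a mutation of the extended Laurent polynomial algebra, and
conversely every such mutation gives a transposed Poisson structure on `𝒲(a,-1)`. -/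
theorem transposedPoisson_on_wab_neg_one (a : ℂ) :
    (∀ m : Wab →ₗ[ℂ] Wab →ₗ[ℂ] Wab,
      (∀ x y : Wab, m x y = m y x) →
      (∀ x y z : Wab, m (m x y) z = m x (m y z)) →
      (∀ x y z : Wab, (2 : ℂ) • m z (wabBracket a (-1) x y) =
          wabBracket a (-1) (m z x) y + wabBracket a (-1) x (m z y)) →
      ∃ α β : ℤ →₀ ℂ,
        (∀ i j : ℤ, m (Lgen i) (Lgen j) =
          (α.sum fun t c => c • Lgen (i + j + t)) +
          (β.sum fun t c => c • Igen (i + j + t))) ∧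
        (∀ i j : ℤ, m (Lgen i) (Igen j) = α.sum fun t c => c • Igen (i + j + t)) ∧
        (∀ i j : ℤ, m (Igen i) (Igen j) = 0)) ∧
    (∀ α β : ℤ →₀ ℂ,
      (∀ x y z : Wab, wabMul α β (x + y) z = wabMul α β x z + wabMul α β y z) ∧
      (∀ (c : ℂ) (x y : Wab), wabMul α β (c • x) y = c • wabMul α β x y) ∧
      (∀ x y : Wab, wabMul α β x y = wabMul α β y x) ∧
      (∀ x y z : Wab, wabMul α β (wabMul α β x y) z = wabMul α β x (wabMul α β y z)) ∧
      (∀ x y z : Wab, (2 : ℂ) • wabMul α β z (wabBracket a (-1) x y) =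
          wabBracket a (-1) (wabMul α β z x) y + wabBracket a (-1) x (wabMul α β z y))) := by
  constructor
  · intro m hcomm _hassoc hcompat
    have hd : ∀ z : Wab, HalfDer a (m z) := by
      intro z x y
      have h := hcompat x y z
      rwa [wabBracket_eq, wabBracket_eq, wabBracket_eq] at h
    set w : Wab := m (Finsupp.single (Sum.inl 0) 1) (Finsupp.single (Sum.inl 0) 1) with hw
    refine ⟨w.comapDomain Sum.inl Sum.inl_injective.injOn,
            w.comapDomain Sum.inr Sum.inr_injective.injOn, ?_, ?_, ?_⟩
    · intro i j
      simp only [Lgen, Igen]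
      ext x
      obtain (k | k) := x
      · rw [Finsupp.add_apply, ev_shift_inl_inl, ev_shift_inr_inl, add_zero,
          Finsupp.comapDomain_apply,
          SA a (m (Finsupp.single (Sum.inl i) 1)) (hd _) j k,
          hcomm (Finsupp.single (Sum.inl i) 1) (Finsupp.single (Sum.inl 0) 1),
          SA a (m (Finsupp.single (Sum.inl 0) 1)) (hd _) i (k - j),
          show k - j - i = k - (i + j) by omega]
      · rw [Finsupp.add_apply, ev_shift_inl_inr, ev_shift_inr_inr, zero_add,
          Finsupp.comapDomain_apply,
          SB a (m (Finsupp.single (Sum.inl i) 1)) (hd _) j k,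
          hcomm (Finsupp.single (Sum.inl i) 1) (Finsupp.single (Sum.inl 0) 1),
          SB a (m (Finsupp.single (Sum.inl 0) 1)) (hd _) i (k - j),
          show k - j - i = k - (i + j) by omega]
    · intro i j
      simp only [Lgen, Igen]
      ext x
      obtain (k | k) := x
      · rw [ev_shift_inr_inl, SC a (m (Finsupp.single (Sum.inl i) 1)) (hd _) j k]
      · rw [ev_shift_inr_inr, Finsupp.comapDomain_apply,
          SD a (m (Finsupp.single (Sum.inl i) 1)) (hd _) j k,
          hcomm (Finsupp.single (Sum.inl i) 1) (Finsupp.single (Sum.inl 0) 1),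
          SA a (m (Finsupp.single (Sum.inl 0) 1)) (hd _) i (k - j),
          show k - j - i = k - (i + j) by omega]
    · intro i j
      simp only [Lgen, Igen]
      ext x
      obtain (k | k) := x
      · rw [SC a (m (Finsupp.single (Sum.inr i) 1)) (hd _) j k]
        rfl
      · rw [SD a (m (Finsupp.single (Sum.inr i) 1)) (hd _) j k,
          hcomm (Finsupp.single (Sum.inr i) 1) (Finsupp.single (Sum.inl 0) 1),
          SC a (m (Finsupp.single (Sum.inl 0) 1)) (hd _) i (k - j)]
        rfl
  · intro α β
    refine ⟨fun x y z => ?_, fun c x y => ?_, fun x y => ?_, fun x y z => ?_, fun x y z => ?_⟩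
    · rw [wabMul_eq, wabMul_eq, wabMul_eq, bilin_add_left]
    · rw [wabMul_eq, wabMul_eq, bilin_smul_left]
    · rw [wabMul_eq, wabMul_eq]; exact wabMul_comm' α β x y
    · rw [wabMul_eq, wabMul_eq, wabMul_eq, wabMul_eq]; exact mul_assoc' α β x y z
    · rw [wabMul_eq, wabMul_eq, wabMul_eq, wabBracket_eq, wabBracket_eq, wabBracket_eq]
      exact compat' a α β x y z
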